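/- Let G be a countable group acting measurably on a measurable space X, let μ be a probability measure on G, and let ν be a μ-stationary probability measure on X. Let A ⊆ X be a measurable subset. Assume: (i) for all g₁, g₂ ∈ G, either ν(g₁A ∩ g₂A) = 0 or ν(g₁A △ g₂A) = 0 (i.e., any two translates of A either are ν-essentially disjoint or ν-essentially coincide); and (ii) there are infinitely many elements g of the subgroup of G generated by the support of μ whose translates gA are pairwise not ν-essentially equal. Then ν(A) = 0. -/

import Mathlib

open MeasureTheory Pointwise
open scoped ENNReal

/-- `ν` is a `μ`-stationary measure for the action of the countable group `G` on `X`: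
`ν(B) = Σ_{g ∈ G} μ({g}) ν(g⁻¹ • B)` for every measurable `B`. -/
def IsStationaryMeasure {G X : Type*} [Group G] [MeasurableSpace G] [MeasurableSpace X]
    [MulAction G X] (μ : Measure G) (ν : Measure X) : Prop :=
  ∀ B : Set X, MeasurableSet B → ν B = ∑' g : G, μ {g} * ν (g⁻¹ • B)

/-- If `A ⊆ X` is measurable, any two `G`-translates of `A` are either `ν`-essentially
disjoint or `ν`-essentially equal, and there are infinitely many elements of the
subgroup generated by the support of `μ` whose translates of `A` are pairwise not
`ν`-essentially equal, then `ν(A) = 0`. -/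
theorem stationary_measure_zero_of_infinitely_many_translates
    {G X : Type*} [Group G] [Countable G] [MeasurableSpace G] [MeasurableSpace X]
    [MulAction G X] [MeasurableSMul G X]
    (μ : Measure G) [IsProbabilityMeasure μ]
    (ν : Measure X) [IsProbabilityMeasure ν]
    (hstat : IsStationaryMeasure μ ν)
    (A : Set X) (hA : MeasurableSet A)
    (hdisj : ∀ g₁ g₂ : G, ν ((g₁ • A) ∩ (g₂ • A)) = 0 ∨ ν (symmDiff (g₁ • A) (g₂ • A)) = 0)
    (hinf : ∃ S : Set G, S.Infinite ∧
      S ⊆ (Subgroup.closure {g : G | μ {g} ≠ 0} : Subgroup G) ∧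
      ∀ g ∈ S, ∀ h ∈ S, g ≠ h → ν (symmDiff (g • A) (h • A)) ≠ 0) :
    ν A = 0 := by
  classical
  by_contra h0
  obtain ⟨S, hSinf, hSsub, hSpair⟩ := hinf
  set s : Set G := {g : G | μ {g} ≠ 0} with hs
  set H : Subgroup G := Subgroup.closure s with hH
  have mA : ∀ g : G, MeasurableSet (g • A) := fun g => hA.const_smul g
  -- basic measure lemmas
  have le_of_diff : ∀ B C : Set X, ν (B \ C) = 0 → ν B ≤ ν C := by
    intro B C h
    calc ν B ≤ ν (B ∩ C) + ν (B \ C) := measure_le_inter_add_diff ν B C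
      _ = ν (B ∩ C) := by rw [h, add_zero]
      _ ≤ ν C := measure_mono Set.inter_subset_right
  have eq_of_sd : ∀ B C : Set X, ν (symmDiff B C) = 0 → ν B = ν C := by
    intro B C h
    rw [Set.symmDiff_def] at h
    have h1 : ν (B \ C) = 0 := measure_mono_null Set.subset_union_left h
    have h2 : ν (C \ B) = 0 := measure_mono_null Set.subset_union_right h
    exact le_antisymm (le_of_diff _ _ h1) (le_of_diff _ _ h2)
  have inter_of_sd : ∀ B C : Set X, ν (symmDiff B C) = 0 → ν B ≤ ν (B ∩ C) := by
    intro B C h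
    rw [Set.symmDiff_def] at h
    have h1 : ν (B \ C) = 0 := measure_mono_null Set.subset_union_left h
    exact le_of_diff B (B ∩ C) (by rw [Set.diff_self_inter]; exact h1)
  -- total mass of μ singletons
  have hsum1 : ∑' g : G, μ {g} = 1 := by
    have h := hstat Set.univ MeasurableSet.univ
    simp only [Set.smul_set_univ, measure_univ, mul_one] at h
    exact h.symm
  -- null sets pull back under the support
  have nullpull : ∀ {B : Set X}, MeasurableSet B → ν B = 0 → ∀ {h : G}, μ {h} ≠ 0 →
      ν (h⁻¹ • B) = 0 := by
    intro B hB hBnull h hh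
    have h1 := hstat B hB
    rw [hBnull] at h1
    have hall := (ENNReal.tsum_eq_zero.mp h1.symm) h
    exact (mul_eq_zero.mp hall).resolve_left hh
  -- stationarity for translates
  have fstat : ∀ g : G, ν (g • A) = ∑' h : G, μ {h} * ν ((h⁻¹ * g) • A) := by
    intro g
    have h1 := hstat (g • A) (mA g)
    simpa [smul_smul] using h1
  set c : ℝ≥0∞ := ⨆ g : H, ν ((g : G) • A) with hc
  have hfle : ∀ g : G, g ∈ H → ν (g • A) ≤ c :=
    fun g hg => le_iSup (fun g : H => ν ((g : G) • A)) ⟨g, hg⟩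
  have hc_le_one : c ≤ 1 := iSup_le fun g => prob_le_one
  have hc_ne_top : c ≠ ⊤ := (hc_le_one.trans_lt ENNReal.one_lt_top).ne
  have hc_ne : c ≠ 0 := by
    intro hczero
    apply h0
    have h1 : ν ((1 : G) • A) ≤ c := hfle 1 H.one_mem
    rw [hczero, le_zero_iff] at h1
    simpa using h1
  have hhalf : c / 2 < c := ENNReal.half_lt_self hc_ne hc_ne_top
  have hhalf_ne : c / 2 ≠ 0 := by
    simpa using (ENNReal.half_pos hc_ne).ne'
  -- the set of large values is finite
  set V : Set ℝ≥0∞ := {v | c / 2 < v ∧ ∃ g ∈ H, ν (g • A) = v} with hV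
  have hVfin : V.Finite := by
    by_contra hVinf'
    have hVinf : V.Infinite := hVinf'
    let e : ℕ ↪ V := hVinf.natEmbedding
    choose rep hrepH hrepf using fun v : V => v.2.2
    have hdis : Pairwise (Function.onFun (AEDisjoint ν) fun n : ℕ => rep (e n) • A) := by
      intro n m hnm
      rcases hdisj (rep (e n)) (rep (e m)) with h | h
      · exact h
      · exact absurd (e.injective (Subtype.ext
          ((hrepf (e n)).symm.trans ((eq_of_sd _ _ h).trans (hrepf (e m)))))) hnm
    have hun := measure_iUnion₀ hdis (fun n => (mA _).nullMeasurableSet)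
    have hge : (⊤ : ℝ≥0∞) ≤ ∑' n : ℕ, ν (rep (e n) • A) := by
      have h2 : (∑' _ : ℕ, c / 2) = ⊤ := ENNReal.tsum_const_eq_top_of_ne_zero hhalf_ne
      rw [← h2]
      exact ENNReal.tsum_le_tsum fun n => le_of_lt (by rw [hrepf (e n)]; exact (e n).2.1)
    rw [← hun] at hge
    exact ENNReal.one_ne_top (top_le_iff.mp (hge.trans prob_le_one))
  -- the sup is attained
  have hatt : ∃ g₀, g₀ ∈ H ∧ ν (g₀ • A) = c := by
    obtain ⟨g₁, hg₁⟩ : ∃ g : H, c / 2 < ν ((g : G) • A) := by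
      by_contra hcon
      push_neg at hcon
      exact absurd ((iSup_le hcon).trans_lt hhalf) (lt_irrefl c)
    have hne : V.Nonempty := ⟨ν ((g₁ : G) • A), hg₁, g₁, g₁.2, rfl⟩
    obtain ⟨v, hvV, hvmax⟩ := Set.Finite.exists_maximalFor id V hVfin hne
    have hmax : ∀ w ∈ V, w ≤ v := by
      intro w hw
      rcases le_total w v with h | h
      · exact h
      · exact (hvmax hw h).ge
    obtain ⟨g₀, hg₀H, hg₀⟩ := hvV.2
    refine ⟨g₀, hg₀H, hg₀.trans ?_⟩
    refine le_antisymm ?_ ?_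
    · exact hg₀ ▸ hfle g₀ hg₀H
    · refine iSup_le fun g => ?_
      rcases le_or_gt (ν ((g : G) • A)) (c / 2) with h | h
      · exact h.trans (hvV.1.le)
      · exact hmax _ ⟨h, g, g.2, rfl⟩
  -- backward closure of the max set
  have back : ∀ g ∈ H, ν (g • A) = c → ∀ h ∈ s, ν ((h⁻¹ * g) • A) = c := by
    intro g hg hfg h hh
    have hmem : ∀ k : G, μ {k} ≠ 0 → (k⁻¹ * g) ∈ H :=
      fun k hk => mul_mem (inv_mem (Subgroup.subset_closure hk)) hg
    have hle : ν ((h⁻¹ * g) • A) ≤ c := hfle _ (hmem h hh)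
    rcases hle.lt_or_eq with hlt | heq
    · exfalso
      have hterm : ∀ k : G, μ {k} * ν ((k⁻¹ * g) • A) ≤ μ {k} * c := by
        intro k
        by_cases hk : μ {k} = 0
        · simp [hk]
        · exact mul_le_mul_right (hfle _ (hmem k hk)) _
      have hstrict : μ {h} * ν ((h⁻¹ * g) • A) < μ {h} * c :=
        (ENNReal.mul_lt_mul_iff_right hh (measure_ne_top μ _)).mpr hlt
      have hsum : (∑' k : G, μ {k} * ν ((k⁻¹ * g) • A)) < ∑' k : G, μ {k} * c :=
        ENNReal.tsum_lt_tsum (by rw [← fstat g, hfg]; exact hc_ne_top) hterm hstrict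
      rw [← fstat g, hfg, ENNReal.tsum_mul_right, hsum1, one_mul] at hsum
      exact lt_irrefl c hsum
    · exact heq
  obtain ⟨g₀, hg₀H, hg₀c⟩ := hatt
  set T : Set G := {g : G | g ∈ H ∧ ν (g • A) = c} with hT
  have hTne : g₀ ∈ T := ⟨hg₀H, hg₀c⟩
  set W : Set X := ⋃ t : T, (t : G) • A with hW
  have mW : MeasurableSet W := MeasurableSet.iUnion fun t => mA _
  have hWsub : ∀ h ∈ s, h⁻¹ • W ⊆ h⁻¹ • W := fun h _ => subset_rfl
  have hWsub2 : ∀ k : G, μ {k} ≠ 0 → k⁻¹ • W ⊆ W := by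
    intro k hk
    rw [hW, Set.smul_set_iUnion]
    refine Set.iUnion_subset fun t => ?_
    have ht' : (k⁻¹ * (t : G)) ∈ T :=
      ⟨mul_mem (inv_mem (Subgroup.subset_closure hk)) t.2.1, back _ t.2.1 t.2.2 k hk⟩
    rw [smul_smul]
    exact Set.subset_iUnion (fun t : T => (t : G) • A) ⟨_, ht'⟩
  have hWeq : ∀ h ∈ s, ν (h⁻¹ • W) = ν W := by
    intro h hh
    have hle : ν (h⁻¹ • W) ≤ ν W := measure_mono (hWsub2 h hh)
    rcases hle.lt_or_eq with hlt | heq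
    · exfalso
      have hterm : ∀ k : G, μ {k} * ν (k⁻¹ • W) ≤ μ {k} * ν W := by
        intro k
        by_cases hk : μ {k} = 0
        · simp [hk]
        · exact mul_le_mul_right (measure_mono (hWsub2 k hk)) _
      have hstrict : μ {h} * ν (h⁻¹ • W) < μ {h} * ν W :=
        (ENNReal.mul_lt_mul_iff_right hh (measure_ne_top μ _)).mpr hlt
      have hsum : (∑' k : G, μ {k} * ν (k⁻¹ • W)) < ∑' k : G, μ {k} * ν W :=
        ENNReal.tsum_lt_tsum (by rw [← hstat W mW]; exact measure_ne_top ν W) hterm hstrict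
      rw [← hstat W mW, ENNReal.tsum_mul_right, hsum1, one_mul] at hsum
      exact lt_irrefl _ hsum
    · exact heq
  -- forward closure
  have forward : ∀ g ∈ H, ν (g • A) = c → ∀ h ∈ s, ν ((h * g) • A) = c := by
    intro g hg hfg h hh
    have hdiffnull : ν (W \ h⁻¹ • W) = 0 := by
      have hd := measure_diff (hWsub2 h hh) (mW.const_smul h⁻¹).nullMeasurableSet
        (measure_ne_top ν _)
      rw [hd, hWeq h hh, tsub_self]
    have hgW : g • A ⊆ W := Set.subset_iUnion (fun t : T => (t : G) • A) ⟨g, hg, hfg⟩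
    have hkey : c ≤ ν (g • A ∩ h⁻¹ • W) := by
      have hsub2 : g • A \ (W \ h⁻¹ • W) ⊆ g • A ∩ h⁻¹ • W := by
        intro x hx
        exact ⟨hx.1, by_contra fun hxw => hx.2 ⟨hgW hx.1, hxw⟩⟩
      calc c = ν (g • A) := hfg.symm
        _ = ν (g • A \ (W \ h⁻¹ • W)) := (measure_diff_null hdiffnull).symm
        _ ≤ ν (g • A ∩ h⁻¹ • W) := measure_mono hsub2
    have hex : ∃ t : T, ν (g • A ∩ (h⁻¹ * (t : G)) • A) ≠ 0 := by
      by_contra hcon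
      push_neg at hcon
      have hz : ν (g • A ∩ h⁻¹ • W) = 0 := by
        rw [hW, Set.smul_set_iUnion, Set.inter_iUnion]
        refine measure_iUnion_null fun t => ?_
        rw [smul_smul]
        exact hcon t
      rw [hz] at hkey
      exact hc_ne (le_zero_iff.mp hkey)
    obtain ⟨t, ht⟩ := hex
    have hsd1 : ν (symmDiff (g • A) ((h⁻¹ * (t : G)) • A)) = 0 :=
      (hdisj g (h⁻¹ * t)).resolve_left ht
    have hne2 : ν ((h * g) • A ∩ (t : G) • A) ≠ 0 := by
      intro hznull
      have hpull := nullpull ((mA _).inter (mA _)) hznull hh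
      rw [Set.smul_set_inter, smul_smul, smul_smul, inv_mul_cancel_left] at hpull
      have hge : ν (g • A) ≤ ν (g • A ∩ (h⁻¹ * (t : G)) • A) := inter_of_sd _ _ hsd1
      rw [hpull, hfg, le_zero_iff] at hge
      exact hc_ne hge
    have hsd2 : ν (symmDiff ((h * g) • A) ((t : G) • A)) = 0 :=
      (hdisj (h * g) t).resolve_left hne2
    rw [eq_of_sd _ _ hsd2]
    exact t.2.2
  -- T is all of H
  have hall : ∀ g ∈ H, ν (g • A) = c := by
    have key : ∀ g ∈ H, (∀ t ∈ T, g * t ∈ T) ∧ (∀ t ∈ T, g⁻¹ * t ∈ T) := by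
      intro g hg
      refine Subgroup.closure_induction ?_ ?_ ?_ ?_ hg
      · intro x hx
        constructor
        · intro t ht
          exact ⟨mul_mem (Subgroup.subset_closure hx) ht.1, forward t ht.1 ht.2 x hx⟩
        · intro t ht
          exact ⟨mul_mem (inv_mem (Subgroup.subset_closure hx)) ht.1, back t ht.1 ht.2 x hx⟩
      · constructor <;> intro t ht <;> simpa using ht
      · intro x y hx hy px py
        constructor
        · intro t ht
          rw [mul_assoc]
          exact px.1 _ (py.1 t ht)
        · intro t ht
          rw [mul_inv_rev, mul_assoc]
          exact py.2 _ (px.2 t ht)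
      · intro x hx px
        refine ⟨px.2, ?_⟩
        intro t ht
        rw [inv_inv]
        exact px.1 t ht
    intro g hg
    have hmem : (g * g₀⁻¹) ∈ H := mul_mem hg (inv_mem hg₀H)
    have hgT := (key (g * g₀⁻¹) hmem).1 g₀ hTne
    rw [mul_assoc, inv_mul_cancel, mul_one] at hgT
    exact hgT.2
  -- final contradiction from S
  haveI := hSinf.to_subtype
  have hdisS : Pairwise (Function.onFun (AEDisjoint ν) fun g : S => (g : G) • A) := by
    intro a b hab
    rcases hdisj (a : G) (b : G) with h | h
    · exact h
    · exact absurd h (hSpair a a.2 b b.2 fun hh => hab (Subtype.ext hh))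
  have hun := measure_iUnion₀ hdisS (fun g => (mA _).nullMeasurableSet)
  have htop : (∑' g : S, ν ((g : G) • A)) = ⊤ := by
    rw [tsum_congr (fun g : S => hall (g : G) (hSsub g.2))]
    exact ENNReal.tsum_const_eq_top_of_ne_zero hc_ne
  rw [htop] at hun
  exact ENNReal.one_ne_top (top_le_iff.mp (hun.ge.trans prob_le_one))
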